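/- arXiv:1504.04424 — 2 statements merged into one kernel-verified Lean document; each statement's English description precedes it below -/
import Mathlib

section
/- Let V be a word with k distinct letters, minimal letter-multiplicity r, and d the gcd of the letter multiplicities of V, and let Σ be a finite alphabet with q ≥ 2 letters. Then there exist a constant c > 0 and an integer N such that for all n > N, the number of V-instances in Σ^{dn} is at least c · q^{dn/r}. -/
open Filter Asymptotics

/-- The substring `W[i,j]` of `W`: the `j - i` consecutive letters of `W`
beginning with the `(i+1)`-th. -/
def subword {β : Type*} (W : List β) (i j : ℕ) : List β :=
  (W.drop i).take (j - i)

/-- `W` is an instance of `V` provided `W = φ(V)` for some nonerasing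
homomorphism `φ`, i.e. a map on letters (no letter mapping to the empty word)
extended by concatenation. -/
def IsInstance {α β : Type*} (V : List α) (W : List β) : Prop :=
  ∃ φ : α → List β, (∀ a, φ a ≠ []) ∧ W = (V.map φ).flatten

/-- A word is doubled provided every letter occurring in it occurs at least twice. -/
def Doubled {α : Type*} [DecidableEq α] (V : List α) : Prop :=
  ∀ a ∈ V, 2 ≤ V.count a

open Classical in
/-- `density V W` is the proportion of the `C(|W|+1, 2)` substrings of `W`
(indexed by pairs `(i,j)` with `0 ≤ i < j ≤ |W|`) that are instances of `V`. -/
noncomputable def density {α β : Type*} (V : List α) (W : List β) : ℝ :=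
  (((Finset.range (W.length + 1) ×ˢ Finset.range (W.length + 1)).filter
      (fun p => p.1 < p.2 ∧ IsInstance V (subword W p.1 p.2))).card : ℝ) /
    (Nat.choose (W.length + 1) 2)

/-- The expected density of `V` in a word of length `n` chosen uniformly at
random over the alphabet `σ` (words of length `n` being encoded as `Fin n → σ`). -/
noncomputable def expDensity {α : Type*} (V : List α) (σ : Type*) [Fintype σ] (n : ℕ) : ℝ :=
  (∑ w : Fin n → σ, density V (List.ofFn w)) / (Fintype.card σ : ℝ) ^ n

/-- `homCount V W` counts the encounters of `V` in `W`: triples `(a, b, φ)`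
where `φ` is a nonerasing homomorphism from the letters of `V` with
`W[a,b] = φ(V)`. -/
noncomputable def homCount {α σ : Type*} (V : List α) (W : List σ) : ℕ :=
  Set.ncard {t : ℕ × ℕ × ({a : α // a ∈ V} → List σ) |
    t.1 < t.2.1 ∧ t.2.1 ≤ W.length ∧ (∀ a, t.2.2 a ≠ []) ∧
    subword W t.1 t.2.1 = (V.attach.map t.2.2).flatten}

/-- Expected number of encounters of `V` in a uniformly random word of length `n`. -/
noncomputable def expHom {α : Type*} (V : List α) (σ : Type*) [Fintype σ] (n : ℕ) : ℝ :=
  (∑ w : Fin n → σ, (homCount V (List.ofFn w) : ℝ)) / (Fintype.card σ : ℝ) ^ n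

/-- `instProb V σ m` is the proportion of words in `σ^m` that are instances of `V`. -/
noncomputable def instProb {α : Type*} (V : List α) (σ : Type*) [Fintype σ] (m : ℕ) : ℝ :=
  (Nat.card {w : Fin m → σ // IsInstance V (List.ofFn w)} : ℝ) / (Fintype.card σ : ℝ) ^ m

/-- The variance of the density of `V` in a uniformly random word of length `n`. -/
noncomputable def varDensity {α : Type*} (V : List α) (σ : Type*) [Fintype σ] (n : ℕ) : ℝ :=
  (∑ w : Fin n → σ, (density V (List.ofFn w) - expDensity V σ n) ^ 2) /
    (Fintype.card σ : ℝ) ^ n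


lemma finset_gcd_bezout {α : Type*} [DecidableEq α] (s : Finset α) (f : α → ℕ) :
    ∃ x : α → ℤ, ((s.gcd f : ℕ) : ℤ) = ∑ a ∈ s, (f a : ℤ) * x a := by
  induction s using Finset.induction_on with
  | empty => exact ⟨0, by simp⟩
  | @insert a s ha ih =>
      obtain ⟨x, hx⟩ := ih
      refine ⟨Function.update (fun b => x b * (Nat.gcdB (f a) (s.gcd f))) a
        (Nat.gcdA (f a) (s.gcd f)), ?_⟩
      rw [Finset.gcd_insert, Finset.sum_insert ha, Function.update_self]
      have h1 : ((gcd (f a) (s.gcd f) : ℕ) : ℤ) = ((Nat.gcd (f a) (s.gcd f) : ℕ) : ℤ) := rfl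
      have h2 : ∑ b ∈ s, (f b : ℤ) * Function.update (fun b => x b * (Nat.gcdB (f a) (s.gcd f)))
            a (Nat.gcdA (f a) (s.gcd f)) b
          = ∑ b ∈ s, (f b : ℤ) * (x b * (Nat.gcdB (f a) (s.gcd f))) :=
        Finset.sum_congr rfl fun b hb => by
          rw [Function.update_of_ne (by rintro rfl; exact ha hb)]
      rw [h1, Nat.gcd_eq_gcd_ab, hx, h2, Finset.sum_mul]
      simp [mul_assoc]

lemma mod_realize (m : ℤ) (r : ℕ) (hr : 0 < r) :
    ∃ ℓ : ℕ, 1 ≤ ℓ ∧ ℓ ≤ r ∧ (r : ℤ) ∣ m - ℓ := by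
  have hr' : (0:ℤ) < r := by exact_mod_cast hr
  have h0 : 0 ≤ (m - 1) % r := Int.emod_nonneg _ (by positivity)
  have h1 : (m - 1) % r < r := Int.emod_lt_of_pos _ hr'
  refine ⟨((m - 1) % r).toNat + 1, Nat.succ_le_succ (Nat.zero_le _), ?_, ?_⟩
  · omega
  · have ht : (((m - 1) % r).toNat : ℤ) = (m - 1) % r := Int.toNat_of_nonneg h0
    have := Int.emod_emod_of_dvd
    refine ⟨(m - 1) / r, ?_⟩
    push_cast [ht]
    have := Int.emod_def (m - 1) r
    linarith

lemma flatten_len {α σ : Type*} [DecidableEq α] (V : List α) (φ : α → List σ) :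
    ((V.map φ).flatten).length = ∑ a ∈ V.toFinset, V.count a * ((φ a).length) := by
  rw [List.length_flatten, List.map_map, Finset.sum_list_map_count]
  simp [Function.comp]

lemma ofFn_cast {σ : Type*} (W : List σ) (m : ℕ) (h : W.length = m) :
    List.ofFn (fun i : Fin m => W.get ⟨i.1, lt_of_lt_of_eq i.isLt h.symm⟩) = W := by
  subst h; simp

lemma count_lemma {α σ : Type*} [DecidableEq α] [Fintype σ] [Nonempty σ] (V : List α) (a₀ : α)
    (ha₀ : a₀ ∈ V) (f : α → ℕ) (hf : ∀ a, 1 ≤ f a) (m : ℕ)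
    (hm : ∑ a ∈ V.toFinset, V.count a * f a = m) :
    (Fintype.card σ) ^ (f a₀) ≤ Nat.card {w : Fin m → σ // IsInstance V (List.ofFn w)} := by
  classical
  obtain ⟨s₀⟩ := ‹Nonempty σ›
  set φ : (Fin (f a₀) → σ) → α → List σ :=
    fun u => Function.update (fun a => List.replicate (f a) s₀) a₀ (List.ofFn u) with hφ
  have hlen : ∀ u a, ((φ u) a).length = f a := by
    intro u a
    by_cases h : a = a₀
    · subst h; simp [hφ]
    · simp [hφ, Function.update_of_ne h]
  have hne : ∀ u a, (φ u) a ≠ [] := by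
    intro u a h
    have h1 := hlen u a
    rw [h, List.length_nil] at h1
    have := hf a; omega
  have hWlen : ∀ u, ((V.map (φ u)).flatten).length = m := by
    intro u
    rw [flatten_len, ← hm]
    exact Finset.sum_congr rfl fun a _ => by rw [hlen]
  set F : (Fin (f a₀) → σ) → {w : Fin m → σ // IsInstance V (List.ofFn w)} :=
    fun u => ⟨fun i => ((V.map (φ u)).flatten).get ⟨i.1, lt_of_lt_of_eq i.isLt (hWlen u).symm⟩,
      ⟨φ u, hne u, ofFn_cast _ m (hWlen u)⟩⟩ with hF
  have hinj : Function.Injective F := by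
    intro u₁ u₂ h
    have hW : (V.map (φ u₁)).flatten = (V.map (φ u₂)).flatten := by
      calc (V.map (φ u₁)).flatten = List.ofFn (F u₁).1 := (ofFn_cast _ m (hWlen u₁)).symm
        _ = List.ofFn (F u₂).1 := by rw [h]
        _ = (V.map (φ u₂)).flatten := ofFn_cast _ m (hWlen u₂)
    obtain ⟨P, Q, hPQ⟩ := List.append_of_mem ha₀
    have key : ∀ u, (V.map (φ u)).flatten
        = (P.map (φ u)).flatten ++ ((φ u) a₀ ++ (Q.map (φ u)).flatten) := by
      intro u; rw [hPQ]; simp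
    have plen : ∀ u, ((P.map (φ u)).flatten).length = (P.map f).sum := by
      intro u
      rw [List.length_flatten, List.map_map]
      congr 1
      exact List.map_congr_left fun a _ => hlen u a
    have extract : ∀ u, (((V.map (φ u)).flatten).drop ((P.map f).sum)).take (f a₀)
        = (φ u) a₀ := by
      intro u
      rw [key u, List.drop_left' (plen u), List.take_left' (hlen u a₀)]
    have heq : (φ u₁) a₀ = (φ u₂) a₀ := by rw [← extract u₁, ← extract u₂, hW]
    simp only [hφ, Function.update_self] at heq
    exact List.ofFn_injective heq
  have hcard := Nat.card_le_card_of_injective F hinj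
  rwa [Nat.card_eq_fintype_card, Fintype.card_fun, Fintype.card_fin] at hcard

/-- Let `V` have minimal letter-multiplicity `r` and gcd of multiplicities `d`,
and let `|Σ| = q ≥ 2`. Then there are `c > 0` and `N` such that for all `n > N`,
the number of `V`-instances in `Σ^{dn}` is at least `c ⬝ q^{dn/r}`. -/
theorem stmt7 {α σ : Type*} [DecidableEq α] [Fintype σ] (V : List α) (hV : V ≠ [])
    (hq : 2 ≤ Fintype.card σ) (r d : ℕ)
    (hr : (∀ a ∈ V, r ≤ V.count a) ∧ ∃ a ∈ V, V.count a = r)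
    (hd : d = V.toFinset.gcd fun a => V.count a) :
    ∃ c : ℝ, 0 < c ∧ ∃ N : ℕ, ∀ n : ℕ, N < n →
      c * (Fintype.card σ : ℝ) ^ (((d : ℝ) * n) / r) ≤
        (Nat.card {w : Fin (d * n) → σ // IsInstance V (List.ofFn w)} : ℝ) := by
  classical
  obtain ⟨hmin, a₀, ha₀V, ha₀r⟩ := hr
  have hq0 : (0:ℝ) < (Fintype.card σ : ℝ) := by
    have : 0 < Fintype.card σ := by omega
    exact_mod_cast this
  have hq1 : (1:ℝ) ≤ (Fintype.card σ : ℝ) := by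
    have : 1 ≤ Fintype.card σ := by omega
    exact_mod_cast this
  have hσne : Nonempty σ := Fintype.card_pos_iff.mp (by omega)
  have ha₀T : a₀ ∈ V.toFinset := List.mem_toFinset.mpr ha₀V
  have hr1 : 0 < r := by
    have := List.count_pos_iff.mpr ha₀V
    omega
  have hr0R : (0:ℝ) < (r:ℝ) := by exact_mod_cast hr1
  set T := V.toFinset.erase a₀ with hT
  obtain ⟨x, hx⟩ := finset_gcd_bezout T (fun a => V.count a)
  have hins : insert a₀ T = V.toFinset := Finset.insert_erase ha₀T
  set g := T.gcd (fun a => V.count a) with hg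
  set A := Nat.gcdA r g with hA
  set B := Nat.gcdB r g with hB
  have hd' : (d:ℤ) = (r:ℤ) * A + (g:ℤ) * B := by
    have hdg : d = Nat.gcd r g := by
      rw [hd, ← hins, Finset.gcd_insert, ha₀r]; rfl
    rw [hdg, Nat.gcd_eq_gcd_ab]
  have hd1 : 1 ≤ d := by
    have hdvd : d ∣ V.count a₀ := hd ▸ Finset.gcd_dvd ha₀T
    rw [ha₀r] at hdvd
    exact Nat.pos_of_dvd_of_pos hdvd hr1
  set M := (∑ a ∈ T, V.count a) * r with hM
  refine ⟨(Fintype.card σ : ℝ) ^ (-(((M + r : ℕ)) : ℝ)/(r:ℝ)),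
    Real.rpow_pos_of_pos hq0 _, M + r, ?_⟩
  intro n hn
  choose ℓ hℓ1 hℓr hℓdvd using fun a : α => mod_realize (x a * B * (n:ℤ)) r hr1
  set S := ∑ a ∈ T, V.count a * ℓ a with hS
  have hSM : S ≤ M := by
    calc S ≤ ∑ a ∈ T, V.count a * r :=
          Finset.sum_le_sum fun a _ => Nat.mul_le_mul_left _ (hℓr a)
      _ = M := by rw [hM, ← Finset.sum_mul]
  have hdn1 : n ≤ d * n := Nat.le_mul_of_pos_left n hd1
  have hnS : S + r ≤ d * n := by omega
  have hdvdZ : (r:ℤ) ∣ (d:ℤ) * n - (S:ℤ) := by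
    have hdn : (d:ℤ) * n = (r:ℤ) * (A * n) + ∑ a ∈ T, (V.count a : ℤ) * (x a * B * n) := by
      calc (d:ℤ) * n = ((r:ℤ) * A + (g:ℤ) * B) * n := by rw [hd']
        _ = (r:ℤ) * (A*n) + (∑ a ∈ T, (V.count a:ℤ) * x a) * (B * n) := by rw [hx]; ring
        _ = (r:ℤ) * (A*n) + ∑ a ∈ T, (V.count a:ℤ) * (x a * B * n) := by
            rw [Finset.sum_mul]
            congr 1
            exact Finset.sum_congr rfl fun a _ => by ring
    have he : (d:ℤ) * n - (S:ℤ)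
        = (r:ℤ) * (A * n) + ∑ a ∈ T, (V.count a : ℤ) * (x a * B * n - (ℓ a : ℤ)) := by
      rw [hdn, hS]
      push_cast
      simp only [mul_sub]
      rw [Finset.sum_sub_distrib]
      ring
    rw [he]
    exact dvd_add (Dvd.intro _ rfl)
      (Finset.dvd_sum fun a _ => Dvd.dvd.mul_left (hℓdvd a) _)
  have hdvdN : r ∣ d * n - S := by
    rw [← Int.natCast_dvd_natCast]
    rwa [Nat.cast_sub (by omega), Nat.cast_mul] at *
  set ℓ₀ := (d * n - S) / r with hℓ₀def
  have hℓ₀ : r * ℓ₀ = d * n - S := Nat.mul_div_cancel' hdvdN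
  have hℓ₀1 : 1 ≤ ℓ₀ := by
    rcases Nat.eq_zero_or_pos ℓ₀ with h | h
    · rw [h, Nat.mul_zero] at hℓ₀; omega
    · exact h
  set f := Function.update ℓ a₀ ℓ₀ with hf
  have hf1 : ∀ a, 1 ≤ f a := by
    intro a
    by_cases h : a = a₀
    · subst h; rw [hf, Function.update_self]; exact hℓ₀1
    · rw [hf, Function.update_of_ne h]; exact hℓ1 a
  have hsum : ∑ a ∈ V.toFinset, V.count a * f a = d * n := by
    rw [← hins, Finset.sum_insert (Finset.notMem_erase a₀ _), hf, Function.update_self, ha₀r]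
    have hTs : ∑ a ∈ T, V.count a * Function.update ℓ a₀ ℓ₀ a = S :=
      Finset.sum_congr rfl fun a haT => by
        rw [Function.update_of_ne (Finset.ne_of_mem_erase haT)]
    rw [hTs]
    omega
  have hcount := count_lemma (σ := σ) V a₀ ha₀V f hf1 (d * n) hsum
  rw [hf, Function.update_self] at hcount
  have h1 : ((Fintype.card σ : ℝ)) ^ (ℓ₀:ℕ)
      ≤ (Nat.card {w : Fin (d * n) → σ // IsInstance V (List.ofFn w)} : ℝ) := by
    exact_mod_cast hcount
  calc (Fintype.card σ : ℝ) ^ (-(((M + r : ℕ)) : ℝ)/(r:ℝ)) * (Fintype.card σ : ℝ) ^ (((d : ℝ) * n) / r)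
      = (Fintype.card σ : ℝ) ^ (-(((M + r : ℕ)) : ℝ)/(r:ℝ) + ((d : ℝ) * n) / r) :=
        (Real.rpow_add hq0 _ _).symm
    _ ≤ (Fintype.card σ : ℝ) ^ ((ℓ₀:ℕ) : ℝ) := by
        apply Real.rpow_le_rpow_of_exponent_le hq1
        rw [← add_div, div_le_iff₀ hr0R]
        have hc1 : ((r:ℝ)) * (ℓ₀:ℝ) = (d:ℝ) * (n:ℝ) - (S:ℝ) := by
          have h' : ((r * ℓ₀ : ℕ) : ℝ) = ((d * n - S : ℕ) : ℝ) := by rw [hℓ₀]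
          push_cast [Nat.cast_sub (show S ≤ d * n by omega)] at h'
          linarith
        have hc2 : (S:ℝ) ≤ (M:ℝ) := by exact_mod_cast hSM
        push_cast
        nlinarith [hc1, hc2]
    _ = (Fintype.card σ : ℝ) ^ (ℓ₀:ℕ) := Real.rpow_natCast _ _
    _ ≤ _ := h1
end

section
/- Let V be a doubled word, Σ a finite alphabet with q ≥ 2 letters, and W_n ∈ Σ^n chosen uniformly at random. Then E(δ(V,W_n)) = Θ(1/n): there exist constants 0 < c_1 ≤ c_2 and an integer N such that c_1/n ≤ E(δ(V,W_n)) ≤ c_2/n for all n > N. -/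
open Filter Asymptotics

lemma subword_ofFn {σ : Type*} {n : ℕ} (w : Fin n → σ) (i m : ℕ) (h : i + m ≤ n) :
    subword (List.ofFn w) i (i + m) = List.ofFn (fun t : Fin m => w ⟨i + t, by omega⟩) := by
  apply List.ext_getElem
  · simp [subword]; omega
  · intro t h1 h2
    simp only [subword, List.getElem_take, List.getElem_drop, List.getElem_ofFn]

noncomputable def subwordSplit {σ : Type*} (P : List σ → Prop) (n i m : ℕ) (h : i + m ≤ n) :
    {w : Fin n → σ // P (subword (List.ofFn w) i (i + m))} ≃
      {b : Fin m → σ // P (List.ofFn b)} × (Fin (n - m) → σ) where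
  toFun x := (⟨fun t => x.1 ⟨i + t, by omega⟩, by
      rw [← subword_ofFn x.1 i m h]; exact x.2⟩,
    fun t => if ht : (t : ℕ) < i then x.1 ⟨t, by omega⟩ else x.1 ⟨(t : ℕ) + m, by omega⟩)
  invFun y := ⟨fun u => if h1 : (u : ℕ) < i then y.2 ⟨u, by omega⟩
      else if h2 : (u : ℕ) < i + m then y.1.1 ⟨(u : ℕ) - i, by omega⟩
      else y.2 ⟨(u : ℕ) - m, by omega⟩, by
    rw [subword_ofFn _ i m h]
    have e : (fun t : Fin m => (fun u : Fin n => if h1 : (u : ℕ) < i then y.2 ⟨u, by omega⟩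
        else if h2 : (u : ℕ) < i + m then y.1.1 ⟨(u : ℕ) - i, by omega⟩
        else y.2 ⟨(u : ℕ) - m, by omega⟩) ⟨i + t, by omega⟩) = y.1.1 := by
      funext t
      simp only
      rw [dif_neg (by omega), dif_pos (by omega)]
      exact congrArg y.1.1 (Fin.ext (by simp))
    rw [e]
    exact y.1.2⟩
  left_inv x := by
    apply Subtype.ext
    funext u
    simp only
    by_cases h1 : (u : ℕ) < i
    · rw [dif_pos h1, dif_pos (by simpa using h1)]
    · by_cases h2 : (u : ℕ) < i + m
      · rw [dif_neg h1, dif_pos h2]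
        exact congrArg x.1 (Fin.ext (by simp; omega))
      · rw [dif_neg h1, dif_neg h2, dif_neg (by simp; omega)]
        exact congrArg x.1 (Fin.ext (by simp; omega))
  right_inv y := by
    apply Prod.ext
    · apply Subtype.ext
      funext t
      simp only
      rw [dif_neg (by omega), dif_pos (by omega)]
      exact congrArg y.1.1 (Fin.ext (by simp))
    · funext t
      simp only
      by_cases ht : (t : ℕ) < i
      · rw [dif_pos (by simpa using ht), dif_pos ht]
      · rw [dif_neg (by simpa using ht), dif_neg (by omega), dif_neg (by omega)]
        exact congrArg y.2 (Fin.ext (by simp))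

lemma card_subword_eq {σ : Type*} [Fintype σ] (P : List σ → Prop) (n i m : ℕ) (h : i + m ≤ n) :
    Nat.card {w : Fin n → σ // P (subword (List.ofFn w) i (i + m))} =
      Nat.card {b : Fin m → σ // P (List.ofFn b)} * Fintype.card σ ^ (n - m) := by
  rw [Nat.card_congr (subwordSplit P n i m h), Nat.card_prod]
  congr 1
  rw [Nat.card_eq_fintype_card, Fintype.card_fun, Fintype.card_fin]

lemma flatten_eq_of {σ : Type*} : ∀ (L₁ L₂ : List (List σ)),
    L₁.map List.length = L₂.map List.length → L₁.flatten = L₂.flatten → L₁ = L₂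
  | [], [], _, _ => rfl
  | a :: L₁, b :: L₂, hl, hf => by
    simp only [List.map_cons, List.cons.injEq] at hl
    simp only [List.flatten_cons] at hf
    obtain ⟨h1, h2⟩ := List.append_inj hf hl.1
    rw [h1, flatten_eq_of L₁ L₂ hl.2 h2]
  | [], _ :: _, hl, _ => by simp at hl
  | _ :: _, [], hl, _ => by simp at hl

lemma instCard_le {α σ : Type*} [DecidableEq α] [Fintype σ] [Nonempty σ] (V : List α)
    (hdbl : Doubled V) (m : ℕ) :
    Nat.card {b : Fin m → σ // IsInstance V (List.ofFn b)} ≤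
      (m + 1) ^ V.toFinset.card * Fintype.card σ ^ (m / 2) := by
  classical
  set s₀ : σ := Classical.arbitrary σ
  -- the encoding
  have key : ∀ x : {b : Fin m → σ // IsInstance V (List.ofFn b)},
      ∃ φ : α → List σ, (∀ a, φ a ≠ []) ∧ List.ofFn x.1 = (V.map φ).flatten := fun x => x.2
  choose φ hφne hφeq using key
  -- basic length facts
  have hsum : ∀ x, (∑ a ∈ V.toFinset, V.count a * (φ x a).length) = m := by
    intro x
    have h1 : (List.ofFn x.1).length = m := List.length_ofFn
    rw [hφeq x] at h1
    rw [← h1, List.length_flatten, List.map_map]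
    rw [Finset.sum_list_map_count V (List.length ∘ φ x)]
    simp [Function.comp]
  have hlen_le : ∀ x, ∀ a ∈ V.toFinset, (φ x a).length ≤ m := by
    intro x a ha
    calc (φ x a).length ≤ V.count a * (φ x a).length := by
          have : 1 ≤ V.count a := le_trans one_le_two (hdbl a (List.mem_toFinset.mp ha))
          nlinarith [this]
      _ ≤ ∑ a ∈ V.toFinset, V.count a * (φ x a).length :=
          Finset.single_le_sum (f := fun a => V.count a * (φ x a).length)
            (fun b _ => Nat.zero_le _) ha
      _ = m := hsum x
  have htot : ∀ x, (∑ a ∈ V.toFinset, (φ x a).length) ≤ m / 2 := by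
    intro x
    rw [Nat.le_div_iff_mul_le two_pos]
    calc (∑ a ∈ V.toFinset, (φ x a).length) * 2 = ∑ a ∈ V.toFinset, 2 * (φ x a).length := by
          rw [Finset.sum_mul]; exact Finset.sum_congr rfl fun a _ => by ring
      _ ≤ ∑ a ∈ V.toFinset, V.count a * (φ x a).length :=
          Finset.sum_le_sum fun a ha =>
            Nat.mul_le_mul_right _ (hdbl a (List.mem_toFinset.mp ha))
      _ = m := hsum x
  -- the concatenated dedup lists
  set M : {b : Fin m → σ // IsInstance V (List.ofFn b)} → List σ :=
    fun x => (V.dedup.map (φ x)).flatten with hM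
  have hMlen : ∀ x, (M x).length = ∑ a ∈ V.toFinset, (φ x a).length := by
    intro x
    rw [hM]
    simp only [List.length_flatten, List.map_map]
    rw [← List.sum_toFinset _ V.nodup_dedup]
    have : V.dedup.toFinset = V.toFinset := by ext a; simp [List.mem_dedup]
    rw [this]
    simp [Function.comp]
  have hMle : ∀ x, (M x).length ≤ m / 2 := fun x => (hMlen x) ▸ htot x
  -- the injection
  set F : {b : Fin m → σ // IsInstance V (List.ofFn b)} →
      (({a : α // a ∈ V.toFinset} → Fin (m + 1)) × (Fin (m / 2) → σ)) :=
    fun x => (fun a => ⟨(φ x a.1).length, Nat.lt_succ_of_le (hlen_le x a.1 a.2)⟩,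
      fun t => (M x).getD t s₀) with hF
  have hFinj : Function.Injective F := by
    intro x y hxy
    rw [hF, Prod.mk.injEq] at hxy
    obtain ⟨h1, h2⟩ := hxy
    have hlen : ∀ a ∈ V.toFinset, (φ x a).length = (φ y a).length := by
      intro a ha
      have := congrFun h1 ⟨a, ha⟩
      exact congrArg Fin.val this
    have hMlenxy : (M x).length = (M y).length := by
      rw [hMlen x, hMlen y]
      exact Finset.sum_congr rfl fun a ha => hlen a ha
    have hMxy : M x = M y := by
      apply List.ext_getElem hMlenxy
      intro t ht1 ht2
      have htlt : t < m / 2 := lt_of_lt_of_le ht1 (hMle x)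
      have h3 : (M x).getD t s₀ = (M y).getD t s₀ := congrFun h2 ⟨t, htlt⟩
      rwa [List.getD_eq_getElem _ _ ht1, List.getD_eq_getElem _ _ ht2] at h3
    have hmap : V.dedup.map (φ x) = V.dedup.map (φ y) := by
      apply flatten_eq_of
      · rw [List.map_map, List.map_map]
        apply List.map_congr_left
        intro a ha
        exact hlen a (List.mem_toFinset.mpr (List.mem_dedup.mp ha))
      · exact hMxy
    have hφxy : ∀ a ∈ V, φ x a = φ y a := by
      intro a ha
      exact List.map_inj_left.mp hmap a (List.mem_dedup.mpr ha)
    have : List.ofFn x.1 = List.ofFn y.1 := by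
      rw [hφeq x, hφeq y, List.map_congr_left hφxy]
    exact Subtype.ext (List.ofFn_injective this)
  calc Nat.card {b : Fin m → σ // IsInstance V (List.ofFn b)} ≤
      Nat.card (({a : α // a ∈ V.toFinset} → Fin (m + 1)) × (Fin (m / 2) → σ)) :=
        Nat.card_le_card_of_injective F hFinj
    _ = (m + 1) ^ V.toFinset.card * Fintype.card σ ^ (m / 2) := by
        rw [Nat.card_eq_fintype_card, Fintype.card_prod, Fintype.card_fun, Fintype.card_fun,
          Fintype.card_fin]
        rw [Fintype.card_coe, Fintype.card_fin]

lemma instCard_pos {α σ : Type*} [Fintype σ] [Nonempty σ] (V : List α) :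
    0 < Nat.card {b : Fin V.length → σ // IsInstance V (List.ofFn b)} := by
  have s₀ : σ := Classical.arbitrary σ
  have hflat : ∀ W : List α, (W.map (fun _ : α => [s₀])).flatten = List.replicate W.length s₀ := by
    intro W
    induction W with
    | nil => simp
    | cons a W ih => simp [List.replicate_succ, ih]
  have hinst : IsInstance V (List.ofFn (fun _ : Fin V.length => s₀)) := by
    refine ⟨fun _ => [s₀], fun a => by simp, ?_⟩
    rw [List.ofFn_const, hflat]
  have : Nonempty {b : Fin V.length → σ // IsInstance V (List.ofFn b)} := ⟨⟨_, hinst⟩⟩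
  exact Nat.card_pos

lemma pow_half_bound {q : ℝ} (hq : 1 ≤ q) (m n : ℕ) (hmn : m ≤ n) :
    q ^ (m / 2) * q ^ (n - m) ≤ q ^ n * ((Real.sqrt q)⁻¹) ^ m := by
  have hq0 : (0:ℝ) < q := lt_of_lt_of_le one_pos hq
  have hs0 : (0:ℝ) < Real.sqrt q := Real.sqrt_pos.mpr hq0
  have key : Real.sqrt q ^ m * q ^ (m / 2) ≤ q ^ m := by
    have hsq : Real.sqrt q ^ 2 = q := Real.sq_sqrt hq0.le
    have h2 : (Real.sqrt q ^ m * q ^ (m / 2)) ^ 2 = q ^ m * q ^ (m / 2 * 2) := by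
      rw [mul_pow, ← pow_mul, ← pow_mul, mul_comm m 2, pow_mul, hsq]
    have h3 : (Real.sqrt q ^ m * q ^ (m / 2)) ^ 2 ≤ (q ^ m) ^ 2 := by
      rw [h2, ← pow_mul]
      have : q ^ (m / 2 * 2) ≤ q ^ m := pow_le_pow_right₀ hq (by omega)
      calc q ^ m * q ^ (m / 2 * 2) ≤ q ^ m * q ^ m :=
            mul_le_mul_of_nonneg_left this (by positivity)
        _ = q ^ (m * 2) := by rw [← pow_add]; congr 1; ring
    have hA : (0:ℝ) ≤ Real.sqrt q ^ m * q ^ (m / 2) := by positivity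
    calc Real.sqrt q ^ m * q ^ (m / 2)
        = Real.sqrt ((Real.sqrt q ^ m * q ^ (m / 2)) ^ 2) := (Real.sqrt_sq hA).symm
      _ ≤ Real.sqrt ((q ^ m) ^ 2) := Real.sqrt_le_sqrt h3
      _ = q ^ m := Real.sqrt_sq (by positivity)
  have hqn : q ^ n = q ^ (n - m) * q ^ m := by rw [← pow_add]; congr 1; omega
  rw [hqn, inv_pow, mul_comm (q ^ (n-m) * q ^ m), ← div_eq_inv_mul,
    le_div_iff₀ (by positivity)]
  calc q ^ (m / 2) * q ^ (n - m) * Real.sqrt q ^ m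
      = (Real.sqrt q ^ m * q ^ (m / 2)) * q ^ (n - m) := by ring
    _ ≤ q ^ m * q ^ (n - m) := mul_le_mul_of_nonneg_right key (by positivity)
    _ = q ^ (n - m) * q ^ m := by ring

open Classical in
lemma expDensity_eq {α σ : Type*} [Fintype σ] (V : List α) (n : ℕ) :
    expDensity V σ n =
      (∑ p ∈ (Finset.range (n+1) ×ˢ Finset.range (n+1)).filter (fun p => p.1 < p.2),
        (Nat.card {w : Fin n → σ // IsInstance V (subword (List.ofFn w) p.1 p.2)} : ℝ)) /
      (((n+1).choose 2 : ℝ) * (Fintype.card σ : ℝ) ^ n) := by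
  classical
  have main : (∑ w : Fin n → σ, ((Finset.range (n+1) ×ˢ Finset.range (n+1)).filter
        (fun p => p.1 < p.2 ∧ IsInstance V (subword (List.ofFn w) p.1 p.2))).card)
      = ∑ p ∈ (Finset.range (n+1) ×ˢ Finset.range (n+1)).filter (fun p => p.1 < p.2),
          Nat.card {w : Fin n → σ // IsInstance V (subword (List.ofFn w) p.1 p.2)} := by
    calc (∑ w : Fin n → σ, ((Finset.range (n+1) ×ˢ Finset.range (n+1)).filter
        (fun p => p.1 < p.2 ∧ IsInstance V (subword (List.ofFn w) p.1 p.2))).card)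
        = ∑ w : Fin n → σ, ∑ p ∈ Finset.range (n+1) ×ˢ Finset.range (n+1),
            if p.1 < p.2 ∧ IsInstance V (subword (List.ofFn w) p.1 p.2) then 1 else 0 := by
          exact Finset.sum_congr rfl fun w _ => Finset.card_filter _ _
      _ = ∑ p ∈ Finset.range (n+1) ×ˢ Finset.range (n+1), ∑ w : Fin n → σ,
            if p.1 < p.2 ∧ IsInstance V (subword (List.ofFn w) p.1 p.2) then 1 else 0 :=
          Finset.sum_comm
      _ = ∑ p ∈ Finset.range (n+1) ×ˢ Finset.range (n+1),
            if p.1 < p.2 then (∑ w : Fin n → σ,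
              if IsInstance V (subword (List.ofFn w) p.1 p.2) then 1 else 0) else 0 := by
          refine Finset.sum_congr rfl fun p _ => ?_
          by_cases hp : p.1 < p.2
          · simp [hp]
          · simp [hp]
      _ = ∑ p ∈ (Finset.range (n+1) ×ˢ Finset.range (n+1)).filter (fun p => p.1 < p.2),
            ∑ w : Fin n → σ,
              if IsInstance V (subword (List.ofFn w) p.1 p.2) then 1 else 0 :=
          (Finset.sum_filter _ _).symm
      _ = ∑ p ∈ (Finset.range (n+1) ×ˢ Finset.range (n+1)).filter (fun p => p.1 < p.2),
          Nat.card {w : Fin n → σ // IsInstance V (subword (List.ofFn w) p.1 p.2)} := by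
          refine Finset.sum_congr rfl fun p _ => ?_
          rw [← Finset.card_filter, Nat.card_eq_fintype_card, Fintype.card_subtype]
  unfold expDensity density
  simp only [List.length_ofFn]
  rw [← Finset.sum_div, div_div]
  congr 1
  · rw [← Nat.cast_sum]
    rw [show (∑ w : Fin n → σ, ((Finset.range (n+1) ×ˢ Finset.range (n+1)).filter
        (fun p => p.1 < p.2 ∧ IsInstance V (subword (List.ofFn w) p.1 p.2))).card) = _ from main]
    rw [Nat.cast_sum]

set_option maxHeartbeats 2000000 in
/-- For a doubled word `V` and `|Σ| = q ≥ 2`, `E(δ(V,W_n)) = Θ(1/n)`. -/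
theorem stmt12 {α σ : Type*} [DecidableEq α] [Fintype σ] (V : List α) (hV : V ≠ [])
    (hdbl : Doubled V) (hq : 2 ≤ Fintype.card σ) :
    ∃ c₁ c₂ : ℝ, 0 < c₁ ∧ c₁ ≤ c₂ ∧ ∃ N : ℕ, ∀ n : ℕ, N < n →
      c₁ / n ≤ expDensity V σ n ∧ expDensity V σ n ≤ c₂ / n := by
  classical
  set q : ℕ := Fintype.card σ with hqdef
  have hq1 : 1 < q := lt_of_lt_of_le one_lt_two hq
  have hσ : Nonempty σ := Fintype.card_pos_iff.mp (by omega)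
  set L : ℕ := V.length with hLdef
  have hL1 : 1 ≤ L := List.length_pos_iff.mpr hV
  set K : ℕ := V.toFinset.card with hKdef
  have hq0R : (0:ℝ) < (q:ℝ) := by exact_mod_cast Nat.lt_of_lt_of_le Nat.zero_lt_one hq1.le
  have hq1R : (1:ℝ) < (q:ℝ) := by exact_mod_cast hq1
  set r : ℝ := (Real.sqrt q)⁻¹ with hrdef
  have h1q : (1:ℝ) < Real.sqrt q := by
    rw [show (1:ℝ) = Real.sqrt 1 from Real.sqrt_one.symm]
    exact Real.sqrt_lt_sqrt (by norm_num) hq1R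
  have hr0 : 0 < r := inv_pos.mpr (lt_trans one_pos h1q)
  have hr1 : r < 1 := inv_lt_one_of_one_lt₀ h1q
  have hsummable : Summable (fun m : ℕ => ((m:ℝ)+1)^K * r^m) := by
    have h0 : Summable (fun m : ℕ => (m:ℝ)^K * r^m) :=
      summable_pow_mul_geometric_of_norm_lt_one K
        (by rw [Real.norm_eq_abs, abs_of_pos hr0]; exact hr1)
    have h1 : Summable (fun m : ℕ => ((m+1:ℕ):ℝ)^K * r^(m+1)) :=
      (summable_nat_add_iff 1).mpr h0
    refine (h1.mul_left r⁻¹).congr fun m => ?_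
    push_cast
    field_simp
    ring
  set S : ℝ := ∑' m : ℕ, ((m:ℝ)+1)^K * r^m with hSdef
  have hS0 : (0:ℝ) ≤ S := tsum_nonneg fun m => by positivity
  refine ⟨1/(2*(q:ℝ)^L), max (1/(2*(q:ℝ)^L)) (2*S), by positivity, le_max_left _ _,
    2*L + 1, fun n hn => ?_⟩
  have hLn : L ≤ n := by omega
  have hn1 : 1 ≤ n := by omega
  have hn0R : (0:ℝ) < n := by exact_mod_cast hn1
  have hCpos : (0:ℝ) < (((n+1).choose 2 : ℕ) : ℝ) := by
    have : 0 < (n+1).choose 2 := Nat.choose_pos (by omega)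
    exact_mod_cast this
  have hC : (((n+1).choose 2 : ℕ) : ℝ) = ((n:ℝ)+1) * n / 2 := by
    rw [Nat.cast_choose_two]
    push_cast
    ring
  rw [expDensity_eq]
  set T := (Finset.range (n+1) ×ˢ Finset.range (n+1)).filter (fun p => p.1 < p.2) with hT
  have hmemT : ∀ p ∈ T, p.1 < p.2 ∧ p.2 ≤ n := by
    intro p hp
    rw [hT, Finset.mem_filter, Finset.mem_product, Finset.mem_range, Finset.mem_range] at hp
    omega
  have hType : ∀ p ∈ T,
      (Nat.card {w : Fin n → σ // IsInstance V (subword (List.ofFn w) p.1 p.2)} : ℝ)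
      = (Nat.card {b : Fin (p.2 - p.1) → σ // IsInstance V (List.ofFn b)} : ℝ) *
          (q:ℝ)^(n - (p.2 - p.1)) := by
    intro p hp
    obtain ⟨hp1, hp2⟩ := hmemT p hp
    have heq := card_subword_eq (σ := σ) (IsInstance V) n p.1 (p.2 - p.1) (by omega)
    rw [show p.1 + (p.2 - p.1) = p.2 from by omega] at heq
    rw [heq]
    push_cast
    ring
  constructor
  · -- lower bound
    have hlow : ((n - L + 1 : ℕ) : ℝ) * (q:ℝ)^(n-L) ≤ ∑ p ∈ T,
        (Nat.card {w : Fin n → σ // IsInstance V (subword (List.ofFn w) p.1 p.2)} : ℝ) := by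
      have hsub : (Finset.range (n - L + 1)).image (fun i => (i, i + L)) ⊆ T := by
        intro p hp
        rw [Finset.mem_image] at hp
        obtain ⟨i, hi, rfl⟩ := hp
        rw [Finset.mem_range] at hi
        rw [hT, Finset.mem_filter, Finset.mem_product, Finset.mem_range, Finset.mem_range]
        refine ⟨⟨by omega, by omega⟩, by omega⟩
      calc ((n - L + 1 : ℕ) : ℝ) * (q:ℝ)^(n-L)
          = ∑ _i ∈ Finset.range (n - L + 1), (q:ℝ)^(n-L) := by
            rw [Finset.sum_const, nsmul_eq_mul, Finset.card_range]
        _ ≤ ∑ i ∈ Finset.range (n - L + 1),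
            (Nat.card {w : Fin n → σ //
              IsInstance V (subword (List.ofFn w) i (i + L))} : ℝ) := by
            refine Finset.sum_le_sum fun i hi => ?_
            rw [Finset.mem_range] at hi
            have heq := card_subword_eq (σ := σ) (IsInstance V) n i L (by omega)
            rw [heq]
            have hpos := instCard_pos (σ := σ) V
            rw [← hLdef] at hpos
            have h1 : 1 * q ^ (n - L) ≤
                Nat.card {b : Fin L → σ // IsInstance V (List.ofFn b)} * q ^ (n - L) :=
              Nat.mul_le_mul_right _ hpos
            calc (q:ℝ)^(n-L) = ((1 * q ^ (n-L) : ℕ) : ℝ) := by push_cast; ring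
              _ ≤ _ := by exact_mod_cast h1
        _ = ∑ p ∈ (Finset.range (n - L + 1)).image (fun i => (i, i + L)),
            (Nat.card {w : Fin n → σ //
              IsInstance V (subword (List.ofFn w) p.1 p.2)} : ℝ) := by
            rw [Finset.sum_image]
            intro x _ y _ h
            exact (Prod.mk.injEq _ _ _ _ ▸ h).1
        _ ≤ _ := Finset.sum_le_sum_of_subset_of_nonneg hsub
            (fun p _ _ => by positivity)
    refine le_trans ?_ ((div_le_div_iff_of_pos_right (by positivity)).mpr hlow)
    -- goal : 1/(2*q^L)/n ≤ (n-L+1) * q^(n-L) / (choose * q^n)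
    have hqn : (q:ℝ)^n = (q:ℝ)^(n-L) * (q:ℝ)^L := by rw [← pow_add]; congr 1; omega
    have hcast : ((n - L + 1 : ℕ) : ℝ) = (n:ℝ) - L + 1 := by
      push_cast [Nat.cast_sub hLn]; ring
    rw [hC, hqn, hcast, div_div, div_le_div_iff₀ (by positivity) (by positivity)]
    have hnL : (2*(L:ℝ)+1) < n := by exact_mod_cast hn
    have hL1R : (1:ℝ) ≤ L := by exact_mod_cast hL1
    have h4 : (n:ℝ) + 1 ≤ 4 * ((n:ℝ) - L + 1) := by linarith
    have hXY : (0:ℝ) < (q:ℝ)^(n-L) * (q:ℝ)^L := by positivity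
    nlinarith [mul_nonneg (mul_nonneg (by linarith : (0:ℝ) ≤ 4*((n:ℝ)-L+1) - ((n:ℝ)+1))
      hn0R.le) hXY.le, hXY, hn0R]
  · -- upper bound
    have hup : ∀ p ∈ T,
        (Nat.card {w : Fin n → σ // IsInstance V (subword (List.ofFn w) p.1 p.2)} : ℝ)
        ≤ (q:ℝ)^n * ((((p.2 - p.1):ℕ):ℝ)+1)^K * r^(p.2 - p.1) := by
      intro p hp
      obtain ⟨hp1, hp2⟩ := hmemT p hp
      rw [hType p hp]
      set m := p.2 - p.1 with hm
      have h1 : (Nat.card {b : Fin m → σ // IsInstance V (List.ofFn b)} : ℝ)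
          ≤ (((m:ℝ))+1)^K * (q:ℝ)^(m/2) := by
        have := instCard_le (σ := σ) V hdbl m
        calc (Nat.card {b : Fin m → σ // IsInstance V (List.ofFn b)} : ℝ)
            ≤ (((m + 1) ^ K * q ^ (m / 2) : ℕ) : ℝ) := by exact_mod_cast this
          _ = (((m:ℝ))+1)^K * (q:ℝ)^(m/2) := by push_cast; ring
      have h2 : (q:ℝ)^(m/2) * (q:ℝ)^(n-m) ≤ (q:ℝ)^n * r^m :=
        pow_half_bound hq1R.le m n (by omega)
      calc (Nat.card {b : Fin m → σ // IsInstance V (List.ofFn b)} : ℝ) * (q:ℝ)^(n-m)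
          ≤ ((((m:ℝ))+1)^K * (q:ℝ)^(m/2)) * (q:ℝ)^(n-m) :=
            mul_le_mul_of_nonneg_right h1 (by positivity)
        _ = (((m:ℝ))+1)^K * ((q:ℝ)^(m/2) * (q:ℝ)^(n-m)) := by ring
        _ ≤ (((m:ℝ))+1)^K * ((q:ℝ)^n * r^m) :=
            mul_le_mul_of_nonneg_left h2 (by positivity)
        _ = (q:ℝ)^n * (((m:ℝ))+1)^K * r^m := by ring
    have hupsum : (∑ p ∈ T,
        (Nat.card {w : Fin n → σ // IsInstance V (subword (List.ofFn w) p.1 p.2)} : ℝ))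
        ≤ (q:ℝ)^n * (((n:ℝ)+1) * S) := by
      calc (∑ p ∈ T,
          (Nat.card {w : Fin n → σ // IsInstance V (subword (List.ofFn w) p.1 p.2)} : ℝ))
          ≤ ∑ p ∈ T, (q:ℝ)^n * ((((p.2 - p.1):ℕ):ℝ)+1)^K * r^(p.2 - p.1) :=
            Finset.sum_le_sum hup
        _ = (q:ℝ)^n * ∑ p ∈ T, ((((p.2 - p.1):ℕ):ℝ)+1)^K * r^(p.2 - p.1) := by
            rw [Finset.mul_sum]; exact Finset.sum_congr rfl fun p _ => by ring
        _ ≤ (q:ℝ)^n * (((n:ℝ)+1) * S) := by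
            refine mul_le_mul_of_nonneg_left ?_ (by positivity)
            have himg : T.image (fun p : ℕ × ℕ => (p.1, p.2 - p.1)) ⊆
                Finset.range (n+1) ×ˢ Finset.range (n+1) := by
              intro p' hp'
              rw [Finset.mem_image] at hp'
              obtain ⟨p, hp, rfl⟩ := hp'
              obtain ⟨h1, h2⟩ := hmemT p hp
              have := hmemT p hp
              rw [hT, Finset.mem_filter, Finset.mem_product, Finset.mem_range,
                Finset.mem_range] at hp
              rw [Finset.mem_product, Finset.mem_range, Finset.mem_range]
              omega
            calc (∑ p ∈ T, ((((p.2 - p.1):ℕ):ℝ)+1)^K * r^(p.2 - p.1))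
                = ∑ p' ∈ T.image (fun p : ℕ × ℕ => (p.1, p.2 - p.1)),
                    (((p'.2:ℕ):ℝ)+1)^K * r^(p'.2) := by
                  rw [Finset.sum_image]
                  intro x hx y hy h
                  obtain ⟨hx1, hx2⟩ := hmemT x hx
                  obtain ⟨hy1, hy2⟩ := hmemT y hy
                  have h1 := (Prod.mk.injEq _ _ _ _ ▸ h).1
                  have h2 := (Prod.mk.injEq _ _ _ _ ▸ h).2
                  exact Prod.ext h1 (by omega)
              _ ≤ ∑ p' ∈ Finset.range (n+1) ×ˢ Finset.range (n+1),
                    (((p'.2:ℕ):ℝ)+1)^K * r^(p'.2) :=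
                  Finset.sum_le_sum_of_subset_of_nonneg himg (fun p' _ _ => by positivity)
              _ = ((n:ℝ)+1) * ∑ m ∈ Finset.range (n+1), (((m:ℕ):ℝ)+1)^K * r^m := by
                  rw [Finset.sum_product]
                  have hconst : (∑ _x ∈ Finset.range (n+1), ∑ y ∈ Finset.range (n+1),
                      (((y:ℕ):ℝ)+1)^K * r^y)
                      = ((n:ℝ)+1) * ∑ m ∈ Finset.range (n+1), (((m:ℕ):ℝ)+1)^K * r^m := by
                    rw [Finset.sum_const, Finset.card_range, nsmul_eq_mul]
                    push_cast
                    ring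
                  exact hconst
              _ ≤ ((n:ℝ)+1) * S := by
                  refine mul_le_mul_of_nonneg_left ?_ (by positivity)
                  exact Summable.sum_le_tsum _ (fun m _ => by positivity) hsummable
    calc (∑ p ∈ T,
        (Nat.card {w : Fin n → σ // IsInstance V (subword (List.ofFn w) p.1 p.2)} : ℝ)) /
          ((((n+1).choose 2 : ℕ)) * (q:ℝ)^n)
        ≤ ((q:ℝ)^n * (((n:ℝ)+1) * S)) / ((((n+1).choose 2 : ℕ)) * (q:ℝ)^n) :=
          (div_le_div_iff_of_pos_right (by positivity)).mpr hupsum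
      _ = 2*S/n := by
          rw [hC]
          field_simp
      _ ≤ max (1/(2*(q:ℝ)^L)) (2*S) / n :=
          (div_le_div_iff_of_pos_right hn0R).mpr (le_max_right _ _)
end
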